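/- ℓ_p step-size bound for least-squares: if f(θ) = ½E(⟨x,θ⟩ − y)² with E‖x‖_q² < ∞ where 1/p + 1/q = 1 and p ∈ (1,2], and h(θ) = ‖θ‖_p²/(2(p−1)), then h − γf is convex for any step-size γ ≤ 1/E‖x‖_q². -/

import Mathlib

open Matrix MeasureTheory
open scoped BigOperators

theorem aux_midpoint_convex {f : ℝ → ℝ} (hc : Continuous f)
    (hm : ∀ a b : ℝ, f ((a + b) / 2) ≤ (f a + f b) / 2) :
    ConvexOn ℝ Set.univ f := by
  have key : ∀ x y : ℝ, ∀ t ∈ Set.Icc (0:ℝ) 1,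
      f ((1 - t) * x + t * y) ≤ (1 - t) * f x + t * f y := by
    intro x y
    set φ : ℝ → ℝ := fun t => (1 - t) * f x + t * f y - f ((1 - t) * x + t * y) with hφ
    have hφc : Continuous φ := by
      apply Continuous.sub
      · fun_prop
      · exact hc.comp (by fun_prop)
    have hS : IsClosed {t : ℝ | 0 ≤ φ t} := isClosed_le continuous_const hφc
    have h0 : 0 ≤ φ 0 := by simp [hφ]
    have h1 : 0 ≤ φ 1 := by simp [hφ]
    have hmid : ∀ s t : ℝ, 0 ≤ φ s → 0 ≤ φ t → 0 ≤ φ ((s + t) / 2) := by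
      intro s t hs ht
      have := hm ((1 - s) * x + s * y) ((1 - t) * x + t * y)
      have e : ((1 - s) * x + s * y + ((1 - t) * x + t * y)) / 2
          = (1 - (s + t) / 2) * x + ((s + t) / 2) * y := by ring
      rw [e] at this
      simp only [hφ] at hs ht ⊢
      linarith
    have hdyad : ∀ n : ℕ, ∀ k : ℕ, k ≤ 2 ^ n → 0 ≤ φ ((k : ℝ) / 2 ^ n) := by
      intro n
      induction n with
      | zero =>
        intro k hk
        interval_cases k
        · simpa using h0
        · simpa using h1
      | succ n ih =>
        intro k hk
        rcases Nat.even_or_odd k with ⟨j, hj⟩ | ⟨j, hj⟩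
        · have hj' : j ≤ 2 ^ n := by omega
          have := ih j hj'
          have e : ((k : ℝ)) / 2 ^ (n + 1) = (j : ℝ) / 2 ^ n := by
            subst hj; push_cast; ring
          rwa [e]
        · have hj1 : j ≤ 2 ^ n := by omega
          have hj2 : j + 1 ≤ 2 ^ n := by omega
          have := hmid ((j : ℝ) / 2 ^ n) (((j : ℝ) + 1) / 2 ^ n) (ih j hj1)
            (by have := ih (j + 1) hj2; push_cast at this ⊢; convert this using 2)
          have e : ((j : ℝ) / 2 ^ n + ((j : ℝ) + 1) / 2 ^ n) / 2 = (k : ℝ) / 2 ^ (n + 1) := by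
            subst hj; push_cast; ring
          rwa [e] at this
    intro t ⟨ht0, ht1⟩
    have hseq : Filter.Tendsto (fun n : ℕ => (⌊t * 2 ^ n⌋₊ : ℝ) / 2 ^ n)
        Filter.atTop (nhds t) := by
      have hup : ∀ n : ℕ, (⌊t * 2 ^ n⌋₊ : ℝ) / 2 ^ n ≤ t := by
        intro n
        rw [div_le_iff₀ (by positivity)]
        exact Nat.floor_le (by positivity)
      have hlow : ∀ n : ℕ, t - 1 / 2 ^ n ≤ (⌊t * 2 ^ n⌋₊ : ℝ) / 2 ^ n := by
        intro n
        rw [sub_le_iff_le_add, ← add_div, le_div_iff₀ (by positivity)]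
        have := Nat.lt_floor_add_one (t * 2 ^ n)
        linarith
      have hhalf : Filter.Tendsto (fun n : ℕ => (1:ℝ) / 2 ^ n) Filter.atTop (nhds 0) := by
        have := tendsto_pow_atTop_nhds_zero_of_lt_one
          (by norm_num : (0:ℝ) ≤ 1/2) (by norm_num : (1:ℝ)/2 < 1)
        simpa [div_pow] using this
      have h2 : Filter.Tendsto (fun n : ℕ => t - 1 / 2 ^ n) Filter.atTop (nhds t) := by
        simpa using tendsto_const_nhds.sub hhalf
      exact tendsto_of_tendsto_of_tendsto_of_le_of_le h2 tendsto_const_nhds hlow hup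
    have hmem : ∀ n : ℕ, 0 ≤ φ ((⌊t * 2 ^ n⌋₊ : ℝ) / 2 ^ n) := by
      intro n
      apply hdyad
      have : t * 2 ^ n ≤ 2 ^ n := by
        nlinarith [pow_pos (by norm_num : (0:ℝ) < 2) n]
      calc ⌊t * 2 ^ n⌋₊ ≤ ⌊(2:ℝ) ^ n⌋₊ := Nat.floor_le_floor this
        _ = 2 ^ n := by
            rw [show ((2:ℝ) ^ n) = ((2 ^ n : ℕ) : ℝ) by push_cast; ring, Nat.floor_natCast]
    have : 0 ≤ φ t := by
      have hcφ : Filter.Tendsto (fun n : ℕ => φ ((⌊t * 2 ^ n⌋₊ : ℝ) / 2 ^ n))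
          Filter.atTop (nhds (φ t)) := (hφc.tendsto t).comp hseq
      exact ge_of_tendsto hcφ (Filter.Eventually.of_forall hmem)
    simp only [hφ] at this
    linarith
  refine ⟨convex_univ, fun a _ b _ s t hs ht hst => ?_⟩
  have := key a b t ⟨ht, by linarith⟩
  have hs1 : s = 1 - t := by linarith
  subst hs1
  simpa [smul_eq_mul] using this

theorem aux_two {s t : ℝ} (hs : s ≤ 0) (ht : -1 < t) (ht' : t < 1) :
    (2 : ℝ) ≤ (1 + t) ^ s + (1 - t) ^ s := by
  have h1 : (0:ℝ) < 1 + t := by linarith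
  have h2 : (0:ℝ) < 1 - t := by linarith
  have hA : (0:ℝ) < (1 + t) ^ s := Real.rpow_pos_of_pos h1 s
  have hB : (0:ℝ) < (1 - t) ^ s := Real.rpow_pos_of_pos h2 s
  -- AM-GM: a + b ≥ 2 √(ab)
  have hamgm : 2 * Real.sqrt ((1 + t) ^ s * (1 - t) ^ s) ≤ (1 + t) ^ s + (1 - t) ^ s := by
    nlinarith [Real.sq_sqrt (le_of_lt (mul_pos hA hB)),
      Real.sqrt_nonneg ((1 + t) ^ s * (1 - t) ^ s),
      sq_nonneg (Real.sqrt ((1 + t) ^ s * (1 - t) ^ s) * Real.sqrt ((1 + t) ^ s * (1-t)^s) - 1),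
      sq_nonneg ((1 + t) ^ s - (1 - t) ^ s)]
  have hprod : (1 + t) ^ s * (1 - t) ^ s = ((1 + t) * (1 - t)) ^ s :=
    (Real.mul_rpow h1.le h2.le).symm
  have hbase : (1 + t) * (1 - t) ≤ 1 := by nlinarith [sq_nonneg t]
  have hbase0 : 0 < (1 + t) * (1 - t) := mul_pos h1 h2
  have hge1 : (1:ℝ) ≤ ((1 + t) * (1 - t)) ^ s := by
    calc (1:ℝ) = ((1 + t) * (1 - t)) ^ (0:ℝ) := by rw [Real.rpow_zero]
    _ ≤ ((1 + t) * (1 - t)) ^ s := Real.rpow_le_rpow_of_exponent_ge hbase0 hbase hs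
  have : (1:ℝ) ≤ Real.sqrt ((1 + t) ^ s * (1 - t) ^ s) := by
    rw [hprod]
    have := Real.sqrt_le_sqrt hge1
    simpa using this
  linarith

theorem aux_G_convex {p : ℝ} (hp1 : 1 < p) (hp2 : p ≤ 2) :
    ConvexOn ℝ (Set.Ioo (-1 : ℝ) 1)
      (fun t => (1 + t) ^ p + (1 - t) ^ p - p * (p - 1) * t ^ 2) := by
  have hp0 : (0:ℝ) < p := by linarith
  set f' : ℝ → ℝ := fun t => p * (1 + t) ^ (p - 1) - p * (1 - t) ^ (p - 1) - 2 * p * (p - 1) * t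
    with hf'def
  set f'' : ℝ → ℝ := fun t =>
    p * (p - 1) * (1 + t) ^ (p - 2) + p * (p - 1) * (1 - t) ^ (p - 2) - 2 * p * (p - 1)
    with hf''def
  have hint : interior (Set.Ioo (-1 : ℝ) 1) = Set.Ioo (-1 : ℝ) 1 := interior_Ioo
  apply convexOn_of_hasDerivWithinAt2_nonneg (convex_Ioo _ _) (f' := f') (f'' := f'')
  · apply ContinuousOn.sub
    apply ContinuousOn.add
    · exact ((continuous_const.add continuous_id).rpow_const
        (fun x => Or.inr hp0.le)).continuousOn
    · exact ((continuous_const.sub continuous_id).rpow_const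
        (fun x => Or.inr hp0.le)).continuousOn
    · fun_prop
  · intro t ht
    rw [hint] at ht
    obtain ⟨ht1, ht2⟩ := ht
    have h1 : (0:ℝ) < 1 + t := by linarith
    have h2 : (0:ℝ) < 1 - t := by linarith
    apply HasDerivAt.hasDerivWithinAt
    have d1 : HasDerivAt (fun t : ℝ => (1 + t) ^ p) (1 * p * (1 + t) ^ (p - 1)) t :=
      (HasDerivAt.rpow_const ((hasDerivAt_id t).const_add 1) (Or.inl h1.ne'))
    have d2 : HasDerivAt (fun t : ℝ => (1 - t) ^ p) ((-1) * p * (1 - t) ^ (p - 1)) t :=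
      (HasDerivAt.rpow_const ((hasDerivAt_id t).const_sub 1) (Or.inl h2.ne'))
    have d3 : HasDerivAt (fun t : ℝ => p * (p - 1) * t ^ 2) (p * (p - 1) * (2 * t)) t := by
      simpa using ((hasDerivAt_pow 2 t).const_mul (p * (p - 1)))
    have := (d1.add d2).sub d3
    convert this using 1
    rfl
    simp [hf'def]; ring
  · intro t ht
    rw [hint] at ht
    obtain ⟨ht1, ht2⟩ := ht
    have h1 : (0:ℝ) < 1 + t := by linarith
    have h2 : (0:ℝ) < 1 - t := by linarith
    apply HasDerivAt.hasDerivWithinAt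
    have d1 : HasDerivAt (fun t : ℝ => (1 + t) ^ (p - 1)) (1 * (p - 1) * (1 + t) ^ (p - 1 - 1)) t :=
      (HasDerivAt.rpow_const ((hasDerivAt_id t).const_add 1) (Or.inl h1.ne'))
    have d2 : HasDerivAt (fun t : ℝ => (1 - t) ^ (p - 1))
        ((-1) * (p - 1) * (1 - t) ^ (p - 1 - 1)) t :=
      (HasDerivAt.rpow_const ((hasDerivAt_id t).const_sub 1) (Or.inl h2.ne'))
    have := ((d1.const_mul p).sub (d2.const_mul p)).sub
      ((hasDerivAt_id t).const_mul (2 * p * (p - 1)))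
    convert this using 1
    rfl
    simp only [hf''def, hf'def]
    ring_nf
  · intro t ht
    rw [hint] at ht
    obtain ⟨ht1, ht2⟩ := ht
    have key := aux_two (s := p - 2) (t := t) (by linarith) ht1 ht2
    have hpp : 0 ≤ p * (p - 1) := by nlinarith
    simp only [hf''def]
    nlinarith

theorem aux_t_lemma {p : ℝ} (hp1 : 1 < p) (hp2 : p ≤ 2) {t : ℝ} (ht0 : 0 ≤ t) (ht1 : t ≤ 1) :
    (1 + (p - 1) * t ^ 2) ^ (p / 2) ≤ ((1 + t) ^ p + (1 - t) ^ p) / 2 := by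
  have hp0 : (0:ℝ) < p := by linarith
  -- the open case
  have main : ∀ s : ℝ, 0 ≤ s → s < 1 →
      (1 + (p - 1) * s ^ 2) ^ (p / 2) ≤ ((1 + s) ^ p + (1 - s) ^ p) / 2 := by
    intro s hs0 hs1
    -- Bernoulli
    have hb : (1 + (p - 1) * s ^ 2) ^ (p / 2) ≤ 1 + p / 2 * ((p - 1) * s ^ 2) :=
      rpow_one_add_le_one_add_mul_self (s := (p - 1) * s ^ 2) (p := p / 2)
        (by nlinarith) (by linarith) (by linarith)
    -- convexity of G and evenness
    have hG := aux_G_convex hp1 hp2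
    have hmem1 : s ∈ Set.Ioo (-1:ℝ) 1 := ⟨by linarith, hs1⟩
    have hmem2 : -s ∈ Set.Ioo (-1:ℝ) 1 := ⟨by linarith, by linarith⟩
    have hmid := hG.2 hmem1 hmem2 (by norm_num : (0:ℝ) ≤ 1/2) (by norm_num : (0:ℝ) ≤ 1/2)
      (by norm_num)
    have e : (1/2 : ℝ) • s + (1/2 : ℝ) • (-s) = 0 := by simp
    rw [e] at hmid
    simp only [smul_eq_mul] at hmid
    have e2 : 1 - -s = 1 + s := by ring
    have e3 : 1 + -s = 1 - s := by ring
    rw [e2, e3] at hmid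
    simp only [add_zero, sub_zero, Real.one_rpow] at hmid
    -- hmid : G 0 ≤ ... ; G 0 = 2
    have h2G : 2 + p * (p - 1) * s ^ 2 ≤ (1 + s) ^ p + (1 - s) ^ p := by nlinarith
    nlinarith
  rcases lt_or_eq_of_le ht1 with h | rfl
  · exact main t ht0 h
  -- t = 1 : limit argument
  have hF : Continuous (fun s : ℝ =>
      ((1 + s) ^ p + (1 - s) ^ p) / 2 - (1 + (p - 1) * s ^ 2) ^ (p / 2)) := by
    apply Continuous.sub
    · apply Continuous.div_const
      apply Continuous.add
      · exact (continuous_const.add continuous_id).rpow_const (fun x => Or.inr hp0.le)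
      · exact (continuous_const.sub continuous_id).rpow_const (fun x => Or.inr hp0.le)
    · exact ((continuous_const.add (continuous_const.mul (continuous_pow 2)))).rpow_const
        (fun x => Or.inr (by positivity))
  have hseq : Filter.Tendsto (fun n : ℕ => 1 - 1 / ((n : ℝ) + 1)) Filter.atTop (nhds 1) := by
    simpa using tendsto_const_nhds.sub (tendsto_one_div_add_atTop_nhds_zero_nat (𝕜 := ℝ))
  have hge : ∀ n : ℕ, 0 ≤ (fun s : ℝ =>
      ((1 + s) ^ p + (1 - s) ^ p) / 2 - (1 + (p - 1) * s ^ 2) ^ (p / 2))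
      (1 - 1 / ((n : ℝ) + 1)) := by
    intro n
    have hpos : 0 < 1 / ((n : ℝ) + 1) := by positivity
    have hle : 1 / ((n : ℝ) + 1) ≤ 1 := by
      rw [div_le_one (by positivity)]; simp
    have := main (1 - 1 / ((n : ℝ) + 1)) (by linarith) (by linarith)
    simpa using sub_nonneg.mpr this
  have hlim := ((hF.tendsto 1).comp hseq)
  have h0 : 0 ≤ ((1 + (1:ℝ)) ^ p + (1 - 1) ^ p) / 2 - (1 + (p - 1) * 1 ^ 2) ^ (p / 2) :=
    ge_of_tendsto hlim (Filter.Eventually.of_forall hge)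
  linarith

theorem aux_scalar_T' {p : ℝ} (hp1 : 1 < p) (hp2 : p ≤ 2) {a b : ℝ} (ha : 0 ≤ a) (hb : 0 ≤ b) :
    (a ^ 2 + (p - 1) * b ^ 2) ^ (p / 2) ≤ ((a + b) ^ p + |a - b| ^ p) / 2 := by
  have hp0 : (0:ℝ) < p := by linarith
  have core : ∀ a b : ℝ, 0 ≤ b → b ≤ a →
      (a ^ 2 + (p - 1) * b ^ 2) ^ (p / 2) ≤ ((a + b) ^ p + (a - b) ^ p) / 2 := by
    intro a b hb0 hba
    have ha0 : 0 ≤ a := le_trans hb0 hba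
    rcases eq_or_lt_of_le ha0 with rfl | hapos
    · have hb0' : b = 0 := le_antisymm (by linarith) hb0
      subst hb0'
      rw [show (0:ℝ)^2 + (p-1) * 0^2 = 0 by ring, show (0:ℝ) + 0 = 0 by ring,
        show (0:ℝ) - 0 = 0 by ring,
        Real.zero_rpow (by positivity : p / 2 ≠ 0), Real.zero_rpow (by positivity : p ≠ 0)]
      norm_num
    · set t := b / a with htdef
      have ht0 : 0 ≤ t := by positivity
      have ht1 : t ≤ 1 := by rw [div_le_one hapos]; exact hba
      have hbt : b = a * t := by rw [htdef]; field_simp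
      have key := aux_t_lemma hp1 hp2 ht0 ht1
      have e1 : a ^ 2 + (p - 1) * b ^ 2 = a ^ 2 * (1 + (p - 1) * t ^ 2) := by
        rw [hbt]; ring
      have e2 : (a ^ 2 * (1 + (p - 1) * t ^ 2)) ^ (p / 2)
          = a ^ p * (1 + (p - 1) * t ^ 2) ^ (p / 2) := by
        rw [Real.mul_rpow (by positivity) (by nlinarith)]
        congr 1
        rw [← Real.rpow_natCast a 2, ← Real.rpow_mul hapos.le]
        congr 1
        push_cast; ring
      have e3 : (a + b) ^ p = a ^ p * (1 + t) ^ p := by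
        rw [hbt, ← Real.mul_rpow hapos.le (by linarith)]; ring_nf
      have e4 : (a - b) ^ p = a ^ p * (1 - t) ^ p := by
        rw [hbt, ← Real.mul_rpow hapos.le (by linarith)]; ring_nf
      rw [e1, e2, e3, e4]
      calc a ^ p * (1 + (p - 1) * t ^ 2) ^ (p / 2)
          ≤ a ^ p * (((1 + t) ^ p + (1 - t) ^ p) / 2) := by
            apply mul_le_mul_of_nonneg_left key (by positivity)
        _ = (a ^ p * (1 + t) ^ p + a ^ p * (1 - t) ^ p) / 2 := by ring
  rcases le_total b a with h | h
  · rw [abs_of_nonneg (by linarith)]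
    exact core a b hb h
  · rw [abs_of_nonpos (by linarith)]
    have h1 : (a ^ 2 + (p - 1) * b ^ 2) ≤ (b ^ 2 + (p - 1) * a ^ 2) := by
      nlinarith [mul_nonneg (sub_nonneg.mpr h) (by linarith : (0:ℝ) ≤ a + b)]
    calc (a ^ 2 + (p - 1) * b ^ 2) ^ (p / 2)
        ≤ (b ^ 2 + (p - 1) * a ^ 2) ^ (p / 2) :=
          Real.rpow_le_rpow (by nlinarith) h1 (by positivity)
      _ ≤ ((b + a) ^ p + (b - a) ^ p) / 2 := core b a ha h
      _ = ((a + b) ^ p + (-(a - b)) ^ p) / 2 := by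
          rw [add_comm b a, show b - a = -(a - b) by ring]



theorem aux_scalar_T {p : ℝ} (hp1 : 1 < p) (hp2 : p ≤ 2) (a b : ℝ) :
    (a ^ 2 + (p - 1) * b ^ 2) ^ (p / 2) ≤ (|a + b| ^ p + |a - b| ^ p) / 2 := by
  have h := aux_scalar_T' hp1 hp2 (abs_nonneg a) (abs_nonneg b)
  rw [sq_abs, sq_abs] at h
  refine le_trans h (le_of_eq ?_)
  rcases le_total 0 a with ha | ha <;> rcases le_total 0 b with hb | hb
  · rw [abs_of_nonneg ha, abs_of_nonneg hb,
      show |a + b| = a + b from abs_of_nonneg (by linarith)]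
  · rw [abs_of_nonneg ha, abs_of_nonpos hb,
      show |a - b| = a + -b from by rw [abs_of_nonneg (by linarith)]; ring,
      show |a - -b| = |a + b| from by rw [show a - -b = a + b by ring]]
    ring
  · rw [abs_of_nonpos ha, abs_of_nonneg hb,
      show |a - b| = -a + b from by rw [show |a - b| = |-(a-b)| from (abs_neg _).symm,
        abs_of_nonneg (by linarith : (0:ℝ) ≤ -(a-b))]; ring,
      show |-a - b| = |a + b| from by rw [show -a - b = -(a + b) by ring, abs_neg]]
    ring
  · rw [abs_of_nonpos ha, abs_of_nonpos hb,
      show |a + b| = -a + -b from by rw [show |a + b| = |-(a+b)| from (abs_neg _).symm,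
        abs_of_nonneg (by linarith : (0:ℝ) ≤ -(a+b))]; ring,
      show |-a - -b| = |a - b| from by rw [show -a - -b = -(a - b) by ring, abs_neg]]

theorem aux_per {r lam mu u v : ℝ} (hr0 : 0 < r) (hr1 : r ≤ 1)
    (hlam : 0 < lam) (hmu : 0 < mu) (hlm : lam + mu = 1) (hu : 0 ≤ u) (hv : 0 ≤ v) :
    lam ^ (1 - r) * u ^ r + mu ^ (1 - r) * v ^ r ≤ (u + v) ^ r := by
  have hconc := Real.concaveOn_rpow hr0.le hr1
  have h1 := hconc.2 (Set.mem_Ici.mpr (div_nonneg hu hlam.le))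
    (Set.mem_Ici.mpr (div_nonneg hv hmu.le)) hlam.le hmu.le hlm
  simp only [smul_eq_mul] at h1
  have e1 : lam * (u / lam) + mu * (v / mu) = u + v := by field_simp
  rw [e1] at h1
  have e2 : lam * (u / lam) ^ r = lam ^ (1 - r) * u ^ r := by
    rw [Real.div_rpow hu hlam.le]
    rw [show lam ^ (1 - r) = lam / lam ^ r from by
      rw [eq_div_iff (Real.rpow_pos_of_pos hlam r).ne', ← Real.rpow_add hlam]
      norm_num]
    field_simp
  have e3 : mu * (v / mu) ^ r = mu ^ (1 - r) * v ^ r := by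
    rw [Real.div_rpow hv hmu.le]
    rw [show mu ^ (1 - r) = mu / mu ^ r from by
      rw [eq_div_iff (Real.rpow_pos_of_pos hmu r).ne', ← Real.rpow_add hmu]
      norm_num]
    field_simp
  rw [e2, e3] at h1
  exact h1

theorem aux_R {d : ℕ} {p : ℝ} (hp1 : 1 < p) (hp2 : p ≤ 2) (a b : Fin d → ℝ) :
    (∑ i, |a i| ^ p) ^ (2 / p) + (p - 1) * (∑ i, |b i| ^ p) ^ (2 / p)
      ≤ (∑ i, ((a i) ^ 2 + (p - 1) * (b i) ^ 2) ^ (p / 2)) ^ (2 / p) := by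
  have hp0 : (0:ℝ) < p := by linarith
  set r : ℝ := p / 2 with hrdef
  have hr0 : 0 < r := by positivity
  have hr1 : r ≤ 1 := by rw [hrdef]; linarith
  have hrp : r * (2 / p) = 1 := by rw [hrdef]; field_simp
  have hpr : (2 / p) * r = 1 := by rw [hrdef]; field_simp
  set Sa := ∑ i, |a i| ^ p with hSa
  set Sb := ∑ i, |b i| ^ p with hSb
  set S := ∑ i, ((a i) ^ 2 + (p - 1) * (b i) ^ 2) ^ r with hS
  have hSa0 : 0 ≤ Sa := Finset.sum_nonneg fun i _ => Real.rpow_nonneg (abs_nonneg _) _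
  have hSb0 : 0 ≤ Sb := Finset.sum_nonneg fun i _ => Real.rpow_nonneg (abs_nonneg _) _
  have hS0 : 0 ≤ S := Finset.sum_nonneg fun i _ =>
    Real.rpow_nonneg (by nlinarith [sq_nonneg (a i), sq_nonneg (b i)]) _
  set A := Sa ^ (2 / p) with hA
  set B := (p - 1) * Sb ^ (2 / p) with hB
  have hA0 : 0 ≤ A := Real.rpow_nonneg hSa0 _
  have hB0 : 0 ≤ B := mul_nonneg (by linarith) (Real.rpow_nonneg hSb0 _)
  have hsq : ∀ c : ℝ, (c ^ 2 : ℝ) ^ r = |c| ^ p := by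
    intro c
    rw [← sq_abs, ← Real.rpow_natCast |c| 2, ← Real.rpow_mul (abs_nonneg c)]
    congr 1
    rw [hrdef]; push_cast; ring
  have hAr : A ^ r = Sa := by
    rw [hA, ← Real.rpow_mul hSa0, hpr, Real.rpow_one]
  have hBr : B ^ r = (p - 1) ^ r * Sb := by
    rw [hB, Real.mul_rpow (by linarith) (Real.rpow_nonneg hSb0 _),
      ← Real.rpow_mul hSb0, hpr, Real.rpow_one]
  have hterm_a : ∀ i, ((a i) ^ 2 : ℝ) ^ r ≤ ((a i) ^ 2 + (p - 1) * (b i) ^ 2) ^ r := by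
    intro i
    exact Real.rpow_le_rpow (sq_nonneg _) (by nlinarith [sq_nonneg (b i)]) hr0.le
  have hterm_b : ∀ i, ((p - 1) * (b i) ^ 2 : ℝ) ^ r ≤ ((a i) ^ 2 + (p - 1) * (b i) ^ 2) ^ r := by
    intro i
    exact Real.rpow_le_rpow (by nlinarith [sq_nonneg (b i)]) (by nlinarith [sq_nonneg (a i)]) hr0.le
  have hsum_a : ∑ i, ((a i) ^ 2 : ℝ) ^ r = Sa := by
    rw [hSa]; exact Finset.sum_congr rfl fun i _ => hsq (a i)
  have hsum_b : ∑ i, ((p - 1) * (b i) ^ 2 : ℝ) ^ r = (p - 1) ^ r * Sb := by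
    rw [hSb, Finset.mul_sum]
    refine Finset.sum_congr rfl fun i _ => ?_
    rw [Real.mul_rpow (by linarith) (sq_nonneg _), hsq (b i)]
  have hASr : A ^ r ≤ S := by
    rw [hAr, ← hsum_a]
    exact Finset.sum_le_sum fun i _ => hterm_a i
  have hBSr : B ^ r ≤ S := by
    rw [hBr, ← hsum_b]
    exact Finset.sum_le_sum fun i _ => hterm_b i
  have hback : ∀ C : ℝ, 0 ≤ C → C ^ r ≤ S → C ≤ S ^ (2 / p) := by
    intro C hC hCS
    calc C = (C ^ r) ^ (2 / p) := by
          rw [← Real.rpow_mul hC, hrp, Real.rpow_one]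
      _ ≤ S ^ (2 / p) := Real.rpow_le_rpow (Real.rpow_nonneg hC _) hCS (by positivity)
  rcases eq_or_lt_of_le hA0 with hAz | hApos
  · have h' : A + B ≤ B := by rw [← hAz]; ring_nf; rfl
    exact le_trans h' (hback B hB0 hBSr)
  rcases eq_or_lt_of_le hB0 with hBz | hBpos
  · have h' : A + B ≤ A := by rw [← hBz]; ring_nf; rfl
    exact le_trans h' (hback A hA0 hASr)
  have hABpos : 0 < A + B := by linarith
  set lam := A / (A + B) with hlam
  set mu := B / (A + B) with hmu
  have hlampos : 0 < lam := div_pos hApos hABpos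
  have hmupos : 0 < mu := div_pos hBpos hABpos
  have hlammu : lam + mu = 1 := by rw [hlam, hmu]; field_simp
  have hpt : ∀ i, lam ^ (1 - r) * ((a i) ^ 2) ^ r + mu ^ (1 - r) * ((p - 1) * (b i) ^ 2) ^ r
      ≤ ((a i) ^ 2 + (p - 1) * (b i) ^ 2) ^ r := fun i =>
    aux_per hr0 hr1 hlampos hmupos hlammu (sq_nonneg _) (mul_nonneg (by linarith) (sq_nonneg _))
  have hsum : lam ^ (1 - r) * A ^ r + mu ^ (1 - r) * B ^ r ≤ S := by
    rw [hAr, hBr, ← hsum_a, ← hsum_b, Finset.mul_sum, Finset.mul_sum, ← Finset.sum_add_distrib]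
    exact Finset.sum_le_sum fun i _ => hpt i
  have hcompute : lam ^ (1 - r) * A ^ r + mu ^ (1 - r) * B ^ r = (A + B) ^ r := by
    have h1r : 0 ≤ 1 - r := by linarith
    rw [hlam, hmu, Real.div_rpow hA0 hABpos.le, Real.div_rpow hB0 hABpos.le]
    have eA : A ^ (1 - r) / (A + B) ^ (1 - r) * A ^ r = A / (A + B) ^ (1 - r) := by
      rw [div_mul_eq_mul_div, ← Real.rpow_add hApos]
      norm_num
    have eB : B ^ (1 - r) / (A + B) ^ (1 - r) * B ^ r = B / (A + B) ^ (1 - r) := by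
      rw [div_mul_eq_mul_div, ← Real.rpow_add hBpos]
      norm_num
    rw [eA, eB, ← add_div, eq_comm,
      eq_div_iff (Real.rpow_pos_of_pos hABpos (1 - r)).ne', ← Real.rpow_add hABpos]
    norm_num
  exact hback (A + B) hABpos.le (by rw [← hcompute]; exact hsum)

theorem aux_bcl {d : ℕ} {p : ℝ} (hp1 : 1 < p) (hp2 : p ≤ 2) (u v : Fin d → ℝ) :
    (∑ i, |u i| ^ p) ^ (2 / p) + (p - 1) * (∑ i, |v i| ^ p) ^ (2 / p)
      ≤ ((∑ i, |u i + v i| ^ p) ^ (2 / p) + (∑ i, |u i - v i| ^ p) ^ (2 / p)) / 2 := by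
  have hp0 : (0:ℝ) < p := by linarith
  set Sp := ∑ i, |u i + v i| ^ p with hSp
  set Sm := ∑ i, |u i - v i| ^ p with hSm
  have hSp0 : 0 ≤ Sp := Finset.sum_nonneg fun i _ => Real.rpow_nonneg (abs_nonneg _) _
  have hSm0 : 0 ≤ Sm := Finset.sum_nonneg fun i _ => Real.rpow_nonneg (abs_nonneg _) _
  have h1 := aux_R hp1 hp2 u v
  have h2 : ∑ i, ((u i) ^ 2 + (p - 1) * (v i) ^ 2) ^ (p / 2) ≤ (Sp + Sm) / 2 := by
    rw [hSp, hSm, ← Finset.sum_add_distrib]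
    rw [Finset.sum_div]
    exact Finset.sum_le_sum fun i _ => aux_scalar_T hp1 hp2 (u i) (v i)
  have h3 : (∑ i, ((u i) ^ 2 + (p - 1) * (v i) ^ 2) ^ (p / 2)) ^ (2 / p)
      ≤ ((Sp + Sm) / 2) ^ (2 / p) := by
    apply Real.rpow_le_rpow (Finset.sum_nonneg fun i _ => Real.rpow_nonneg
      (by nlinarith [sq_nonneg (u i), sq_nonneg (v i)]) _) h2 (by positivity)
  have h4 : ((Sp + Sm) / 2) ^ (2 / p) ≤ (Sp ^ (2 / p) + Sm ^ (2 / p)) / 2 := by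
    have := Real.rpow_arith_mean_le_arith_mean_rpow (Finset.univ : Finset (Fin 2))
      ![1/2, 1/2] ![Sp, Sm]
      (by intro i _; fin_cases i <;> norm_num)
      (by norm_num [Fin.sum_univ_two])
      (by intro i _; fin_cases i <;> simpa)
      (by rw [le_div_iff₀ hp0]; linarith : (1:ℝ) ≤ 2 / p)
    have e : ((Sp + Sm) / 2) = 2⁻¹ * Sp + 2⁻¹ * Sm := by ring
    rw [e]
    simp only [Fin.sum_univ_two, Matrix.cons_val_zero, Matrix.cons_val_one, Matrix.head_cons] at this
    calc (2⁻¹ * Sp + 2⁻¹ * Sm) ^ (2 / p) ≤ 2⁻¹ * Sp ^ (2 / p) + 2⁻¹ * Sm ^ (2 / p) := by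
          convert this using 2 <;> norm_num
      _ = (Sp ^ (2 / p) + Sm ^ (2 / p)) / 2 := by ring
  calc (∑ i, |u i| ^ p) ^ (2 / p) + (p - 1) * (∑ i, |v i| ^ p) ^ (2 / p)
      ≤ (∑ i, ((u i) ^ 2 + (p - 1) * (v i) ^ 2) ^ (p / 2)) ^ (2 / p) := h1
    _ ≤ ((Sp + Sm) / 2) ^ (2 / p) := h3
    _ ≤ (Sp ^ (2 / p) + Sm ^ (2 / p)) / 2 := h4

theorem aux_holder {d : ℕ} {p q : ℝ} (hp1 : 1 < p) (hp2 : p ≤ 2) (hpq : 1 / p + 1 / q = 1)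
    (z v : Fin d → ℝ) :
    (z ⬝ᵥ v) ^ 2 ≤ (∑ i, |z i| ^ q) ^ (2 / q) * (∑ i, |v i| ^ p) ^ (2 / p) := by
  have hp0 : (0:ℝ) < p := by linarith
  have hinvq : 1 / q = 1 - 1 / p := by linarith
  have hinvqpos : 0 < 1 / q := by
    rw [hinvq]
    have : 1 / p < 1 := by rw [div_lt_one hp0]; linarith
    linarith
  have hq0 : 0 < q := by
    by_contra h
    push_neg at h
    have : 1 / q ≤ 0 := div_nonpos_of_nonneg_of_nonpos (by norm_num) h
    linarith
  have hq1 : 1 < q := by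
    have h2 : 1 / q < 1 := by
      rw [hinvq]
      have : 0 < 1 / p := by positivity
      linarith
    rw [div_lt_one hq0] at h2
    exact h2
  have hconj : Real.HolderConjugate q p := Real.holderConjugate_iff.mpr ⟨hq1, by
    rw [← one_div, ← one_div]; linarith⟩
  have habs : |z ⬝ᵥ v| ≤ (∑ i, |z i| ^ q) ^ (1 / q) * (∑ i, |v i| ^ p) ^ (1 / p) := by
    rcases abs_cases (z ⬝ᵥ v) with ⟨h, _⟩ | ⟨h, _⟩ <;> rw [h]
    · exact Real.inner_le_Lp_mul_Lq Finset.univ z v hconj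
    · have := Real.inner_le_Lp_mul_Lq Finset.univ (fun i => -z i) v hconj
      simp only [abs_neg] at this
      calc -(z ⬝ᵥ v) = ∑ i, (fun i => -z i) i * v i := by
            simp only [dotProduct, ← Finset.sum_neg_distrib]
            exact Finset.sum_congr rfl fun i _ => by ring
        _ ≤ _ := this
  have h2 : (z ⬝ᵥ v) ^ 2 = |z ⬝ᵥ v| ^ 2 := (sq_abs _).symm
  have hz0 : (0:ℝ) ≤ (∑ i, |z i| ^ q) ^ (1 / q) :=
    Real.rpow_nonneg (Finset.sum_nonneg fun i _ => Real.rpow_nonneg (abs_nonneg _) _) _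
  have hv0 : (0:ℝ) ≤ (∑ i, |v i| ^ p) ^ (1 / p) :=
    Real.rpow_nonneg (Finset.sum_nonneg fun i _ => Real.rpow_nonneg (abs_nonneg _) _) _
  rw [h2]
  calc |z ⬝ᵥ v| ^ 2 ≤ ((∑ i, |z i| ^ q) ^ (1 / q) * (∑ i, |v i| ^ p) ^ (1 / p)) ^ 2 := by
        apply pow_le_pow_left₀ (abs_nonneg _) habs
    _ = (∑ i, |z i| ^ q) ^ (2 / q) * (∑ i, |v i| ^ p) ^ (2 / p) := by
        rw [mul_pow]
        congr 1
        · rw [← Real.rpow_natCast ((∑ i, |z i| ^ q) ^ (1 / q)) 2, ← Real.rpow_mul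
            (Finset.sum_nonneg fun i _ => Real.rpow_nonneg (abs_nonneg _) _)]
          congr 1
          push_cast; ring
        · rw [← Real.rpow_natCast ((∑ i, |v i| ^ p) ^ (1 / p)) 2, ← Real.rpow_mul
            (Finset.sum_nonneg fun i _ => Real.rpow_nonneg (abs_nonneg _) _)]
          congr 1
          push_cast; ring

/-- `ℓ_p` step-size bound for least-squares: with
`f(θ) = ½E(⟨x,θ⟩ − y)²`, `h(θ) = ‖θ‖_p²/(2(p−1))`, `1/p + 1/q = 1`,
`h − γf` is convex for any `γ ≤ 1/E‖x‖_q²`. -/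
theorem stmt_16 {d : ℕ} {Ω : Type*} [MeasurableSpace Ω]
    (P : Measure Ω) [IsProbabilityMeasure P]
    (x : Ω → Fin d → ℝ) (y : Ω → ℝ)
    (p q : ℝ) (hp1 : 1 < p) (hp2 : p ≤ 2) (hpq : 1 / p + 1 / q = 1)
    (hxq : Integrable (fun ω => (∑ i, |x ω i| ^ q) ^ (2 / q)) P)
    (hfint : ∀ θ : Fin d → ℝ, Integrable (fun ω => (x ω ⬝ᵥ θ - y ω) ^ 2) P)
    (γ : ℝ) (hγ0 : 0 ≤ γ)
    (hγ : γ * ∫ ω, (∑ i, |x ω i| ^ q) ^ (2 / q) ∂P ≤ 1) :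
    ConvexOn ℝ Set.univ (fun θ : Fin d → ℝ =>
      (∑ i, |θ i| ^ p) ^ (2 / p) / (2 * (p - 1))
        - γ * (1 / 2 * ∫ ω, (x ω ⬝ᵥ θ - y ω) ^ 2 ∂P)) := by
  have hp0 : (0:ℝ) < p := by linarith
  have hK : (0:ℝ) < 2 * (p - 1) := by linarith
  set G : (Fin d → ℝ) → ℝ := fun θ =>
    (∑ i, |θ i| ^ p) ^ (2 / p) / (2 * (p - 1))
      - γ * (1 / 2 * ∫ ω, (x ω ⬝ᵥ θ - y ω) ^ 2 ∂P) with hG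
  refine ⟨convex_univ, fun a _ b _ s t hs ht hst => ?_⟩
  -- line functions
  set u : Ω → ℝ := fun ω => x ω ⬝ᵥ (b - a) with hu
  set w : Ω → ℝ := fun ω => x ω ⬝ᵥ a - y ω with hw
  have hdot : ∀ (r : ℝ) (ω : Ω), x ω ⬝ᵥ (a + r • (b - a)) - y ω = w ω + r * u ω := by
    intro r ω
    simp only [hu, hw, dotProduct, Pi.add_apply, Pi.smul_apply, Pi.sub_apply,
      smul_eq_mul]
    rw [show ∑ i, x ω i * (a i + r * (b i - a i))
        = ∑ i, (x ω i * a i + r * (x ω i * (b i - a i))) from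
      Finset.sum_congr rfl fun i _ => by ring,
      Finset.sum_add_distrib, ← Finset.mul_sum]
    ring
  -- integrability
  have Iw : Integrable (fun ω => (w ω) ^ 2) P := by
    have := hfint a
    simpa [hw] using this
  have Iwu : Integrable (fun ω => (w ω + u ω) ^ 2) P := by
    have := hfint b
    convert this using 2 with ω
    rw [show b = a + (1:ℝ) • (b - a) from by funext i; simp, hdot 1 ω]
    try ring_nf
  have Iwmu : Integrable (fun ω => (w ω - u ω) ^ 2) P := by
    have := hfint (a + (-1:ℝ) • (b - a))
    convert this using 2 with ω
    rw [hdot (-1) ω]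
    try ring_nf
  have Iu2 : Integrable (fun ω => (u ω) ^ 2) P := by
    have : (fun ω => (u ω) ^ 2)
        = fun ω => (1/2) * (((w ω + u ω) ^ 2 + (w ω - u ω) ^ 2) - 2 * (w ω) ^ 2) :=
      funext fun ω => by ring
    rw [this]
    exact (((Iwu.add Iwmu).sub (Iw.const_mul 2)).const_mul (1/2))
  have Iuw : Integrable (fun ω => u ω * w ω) P := by
    have : (fun ω => u ω * w ω)
        = fun ω => (1/4) * ((w ω + u ω) ^ 2 - (w ω - u ω) ^ 2) := funext fun ω => by ring
    rw [this]
    exact ((Iwu.sub Iwmu).const_mul (1/4))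
  set A' : ℝ := ∫ ω, (u ω) ^ 2 ∂P with hA'
  set B' : ℝ := ∫ ω, u ω * w ω ∂P with hB'
  set C' : ℝ := ∫ ω, (w ω) ^ 2 ∂P with hC'
  have hA'0 : 0 ≤ A' := integral_nonneg fun ω => sq_nonneg _
  have hI : ∀ r : ℝ, ∫ ω, (x ω ⬝ᵥ (a + r • (b - a)) - y ω) ^ 2 ∂P
      = C' + 2 * r * B' + r ^ 2 * A' := by
    intro r
    have e : (fun ω => (x ω ⬝ᵥ (a + r • (b - a)) - y ω) ^ 2)
        = fun ω => (w ω) ^ 2 + (2 * r * (u ω * w ω) + r ^ 2 * (u ω) ^ 2) := by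
      funext ω
      rw [hdot r ω]
      ring
    have hg1 : Integrable (fun ω => 2 * r * (u ω * w ω)) P := by
      exact Iuw.const_mul (2 * r)
    have hg2 : Integrable (fun ω => r ^ 2 * (u ω) ^ 2) P := by
      exact Iu2.const_mul (r ^ 2)
    have hg : Integrable (fun ω => 2 * r * (u ω * w ω) + r ^ 2 * (u ω) ^ 2) P := by
      exact hg1.add hg2
    rw [e, integral_add Iw hg, integral_add hg1 hg2, integral_const_mul, integral_const_mul]
    try rw [← hA']
    try rw [← hB']
    try rw [← hC']
    try ring
  -- explicit line function
  set φ : ℝ → ℝ := fun r =>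
    (∑ i, |a i + r * (b i - a i)| ^ p) ^ (2 / p) / (2 * (p - 1))
      - γ * (1 / 2 * (C' + 2 * r * B' + r ^ 2 * A')) with hφ
  have hφG : ∀ r : ℝ, φ r = G (a + r • (b - a)) := by
    intro r
    rw [hφ, hG]
    simp only
    rw [hI r]
    congr 2
  -- continuity of φ
  have hφc : Continuous φ := by
    rw [hφ]
    apply Continuous.sub
    · apply Continuous.div_const
      apply Continuous.rpow_const
      · apply continuous_finset_sum
        intro i _
        exact ((continuous_const.add (continuous_id.mul continuous_const)).abs).rpow_const
          fun _ => Or.inr hp0.le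
      · exact fun _ => Or.inr (by positivity)
    · fun_prop
  -- midpoint convexity of φ
  have hφm : ∀ r₁ r₂ : ℝ, φ ((r₁ + r₂) / 2) ≤ (φ r₁ + φ r₂) / 2 := by
    intro r₁ r₂
    set δ : ℝ := (r₁ - r₂) / 2 with hδ
    set m : Fin d → ℝ := a + ((r₁ + r₂) / 2) • (b - a) with hm
    set v : Fin d → ℝ := δ • (b - a) with hv
    set Mm : ℝ := (∑ i, |m i| ^ p) ^ (2 / p) with hMm
    set Mv : ℝ := (∑ i, |v i| ^ p) ^ (2 / p) with hMv
    set M1 : ℝ := (∑ i, |a i + r₁ * (b i - a i)| ^ p) ^ (2 / p) with hM1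
    set M2 : ℝ := (∑ i, |a i + r₂ * (b i - a i)| ^ p) ^ (2 / p) with hM2
    have hMv0 : 0 ≤ Mv :=
      Real.rpow_nonneg (Finset.sum_nonneg fun i _ => Real.rpow_nonneg (abs_nonneg _) _) _
    -- BCL
    have hbcl := aux_bcl hp1 hp2 m v
    have e1 : ∑ i, |m i + v i| ^ p = ∑ i, |a i + r₁ * (b i - a i)| ^ p := by
      refine Finset.sum_congr rfl fun i _ => ?_
      congr 1
      simp only [hm, hv, hδ, Pi.add_apply, Pi.smul_apply, Pi.sub_apply, smul_eq_mul]
      ring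
    have e2 : ∑ i, |m i - v i| ^ p = ∑ i, |a i + r₂ * (b i - a i)| ^ p := by
      refine Finset.sum_congr rfl fun i _ => ?_
      congr 1
      simp only [hm, hv, hδ, Pi.add_apply, Pi.smul_apply, Pi.sub_apply, smul_eq_mul]
      ring
    rw [e1, e2] at hbcl
    have h1 : Mm + (p - 1) * Mv ≤ (M1 + M2) / 2 := by
      rw [hMm, hMv, hM1, hM2]; linarith
    -- Hoelder bound
    have h2 : γ * (δ ^ 2 * A') ≤ Mv := by
      have hxv : ∀ ω, x ω ⬝ᵥ v = δ * u ω := by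
        intro ω
        simp only [hv, hu, dotProduct, Pi.smul_apply, Pi.sub_apply, smul_eq_mul,
          Finset.mul_sum]
        exact Finset.sum_congr rfl fun i _ => by ring
      have hmono : ∫ ω, (δ * u ω) ^ 2 ∂P
          ≤ ∫ ω, (∑ i, |x ω i| ^ q) ^ (2 / q) * Mv ∂P := by
        apply integral_mono (by simpa [mul_pow] using (Iu2.const_mul (δ^2)))
          (hxq.mul_const Mv)
        intro ω
        have := aux_holder hp1 hp2 hpq (x ω) v
        rw [hxv ω] at this
        exact this
      have hleft : ∫ ω, (δ * u ω) ^ 2 ∂P = δ ^ 2 * A' := by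
        rw [show (fun ω => (δ * u ω) ^ 2) = fun ω => δ ^ 2 * (u ω) ^ 2 from
          funext fun ω => by ring, integral_const_mul]
      have hright : ∫ ω, (∑ i, |x ω i| ^ q) ^ (2 / q) * Mv ∂P
          = (∫ ω, (∑ i, |x ω i| ^ q) ^ (2 / q) ∂P) * Mv := integral_mul_const _ _
      calc γ * (δ ^ 2 * A') ≤ γ * ((∫ ω, (∑ i, |x ω i| ^ q) ^ (2 / q) ∂P) * Mv) := by
            apply mul_le_mul_of_nonneg_left _ hγ0
            rw [← hleft, ← hright]
            exact hmono
        _ = (γ * ∫ ω, (∑ i, |x ω i| ^ q) ^ (2 / q) ∂P) * Mv := by ring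
        _ ≤ 1 * Mv := mul_le_mul_of_nonneg_right hγ hMv0
        _ = Mv := one_mul _
    -- assembly
    simp only [hφ]
    rw [show (∑ i, |a i + (r₁ + r₂) / 2 * (b i - a i)| ^ p) ^ (2 / p) = Mm from by
      rw [hMm]
      congr 1]
    rw [← hM1, ← hM2]
    set k : ℝ := (2 * (p - 1))⁻¹ with hk
    have hk0 : 0 ≤ k := by positivity
    have hk2 : (p - 1) * k = 1 / 2 := by
      rw [hk, ← div_eq_mul_inv, div_eq_iff hK.ne']
      ring
    have h1k := mul_le_mul_of_nonneg_right h1 hk0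
    have h1k' : Mm * k + Mv * (1 / 2) ≤ (M1 + M2) / 2 * k := by
      have e : (Mm + (p - 1) * Mv) * k = Mm * k + Mv * (1 / 2) := by
        linear_combination Mv * hk2
      linarith [h1k, e.symm.le]
    rw [hδ] at h2
    simp only [show ∀ X : ℝ, X / (2 * (p - 1)) = X * k from fun X => by
      rw [hk, div_eq_mul_inv]]
    linarith [h1k', h2]
  -- conclude
  have hconv := aux_midpoint_convex hφc (fun r₁ r₂ => by simpa using hφm r₁ r₂)
  have := hconv.2 (Set.mem_univ (0:ℝ)) (Set.mem_univ (1:ℝ)) hs ht hst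
  simp only [smul_eq_mul, mul_zero, mul_one, zero_add] at this
  have e0 : φ 0 = G a := by rw [hφG 0]; congr 1; funext i; simp
  have e1 : φ 1 = G b := by rw [hφG 1]; congr 1; funext i; simp
  have eab : s • a + t • b = a + t • (b - a) := by
    funext i
    simp only [Pi.add_apply, Pi.smul_apply, Pi.sub_apply, smul_eq_mul]
    have hs1 : s = 1 - t := by linarith
    rw [hs1]; ring
  calc G (s • a + t • b) = φ t := by rw [hφG t, eab]
    _ ≤ s * φ 0 + t * φ 1 := this
    _ = s * G a + t * G b := by rw [e0, e1]
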